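/- arXiv:1810.06094 — 2 statements merged into one kernel-verified Lean document; each statement's English description precedes it below -/
import Mathlib

section
/- Let s > 1/2 with 1/2 < s < 3/2. Then there exists a constant C_s > 0, depending only on s, such that for all ρ, ρ₁ > 0, ∫_{ℝ} |e^{ixρ} - e^{ixρ₁}|² / (1+|x|)^{2s} dx ≤ C_s |ρ - ρ₁|^{2s-1}. -/
open MeasureTheory Real

/-- If `f` is integrable on `(0,∞)`, then `fun x => f |x|` is integrable on all of `ℝ`. -/
lemma integrable_comp_abs_of_integrableOn {f : ℝ → ℝ}
    (hf0 : IntegrableOn f (Set.Ioi 0)) :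
    Integrable (fun x => f |x|) := by
  have hf : IntegrableOn (fun x => f |x|) (Set.Ioi 0) :=
    hf0.congr_fun (fun x hx => by rw [abs_of_pos hx]) measurableSet_Ioi |>.congr_fun
      (fun x _ => rfl) measurableSet_Ioi
  have int_Iic : IntegrableOn (fun x ↦ f |x|) (Set.Iic 0) := by
    rw [← Measure.map_neg_eq_self (volume : Measure ℝ)]
    let m : MeasurableEmbedding fun x : ℝ => -x := (Homeomorph.neg ℝ).measurableEmbedding
    rw [m.integrableOn_map_iff]
    simp_rw [Function.comp_def, abs_neg, Set.neg_preimage, Set.neg_Iic, neg_zero]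
    exact Iff.mpr integrableOn_Ici_iff_integrableOn_Ioi hf
  rw [← integrableOn_univ, ← Set.Iic_union_Ioi (a := (0:ℝ))]
  exact int_Iic.union hf

theorem stmt_0 (s : ℝ) (hs : 1/2 < s) (hs' : s < 3/2) :
    ∃ C : ℝ, 0 < C ∧ ∀ ρ ρ₁ : ℝ, 0 < ρ → 0 < ρ₁ →
      (∫ x : ℝ, ‖Complex.exp (Complex.I * (x : ℂ) * (ρ : ℂ)) -
          Complex.exp (Complex.I * (x : ℂ) * (ρ₁ : ℂ))‖ ^ 2 / (1 + |x|) ^ (2 * s))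
        ≤ C * |ρ - ρ₁| ^ (2 * s - 1) := by
  have h1 : 0 < 2*s - 1 := by linarith
  have h2 : 0 < 3 - 2*s := by linarith
  refine ⟨8/(3-2*s) + 8/(2*s-1), by positivity, ?_⟩
  intro ρ ρ₁ hρ hρ₁
  set δ := |ρ - ρ₁| with hδdef
  rcases eq_or_lt_of_le (abs_nonneg (ρ - ρ₁)) with hδ0 | hδ0
  · -- δ = 0 : ρ = ρ₁
    have hρeq : ρ = ρ₁ := by
      have h := hδ0.symm
      rw [abs_eq_zero, sub_eq_zero] at h
      exact h
    subst hρeq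
    have hδz : δ = 0 := by rw [hδdef, sub_self, abs_zero]
    rw [hδz, Real.zero_rpow (by linarith : 2*s - 1 ≠ 0), mul_zero]
    simp
  · -- main case: 0 < δ
    set A : ℝ := δ⁻¹ with hAdef
    have hA : 0 < A := inv_pos.mpr hδ0
    set g : ℝ → ℝ := fun t => if t ≤ A then 4*δ^2 * t^(2-2*s) else 4 * t^(-(2*s)) with hg
    -- norm bounds
    have hnorm1 : ∀ x : ℝ, ‖Complex.exp (Complex.I * (x:ℂ) * (ρ:ℂ)) -
        Complex.exp (Complex.I * (x:ℂ) * (ρ₁:ℂ))‖ ≤ 2 := by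
      intro x
      have e1 : Complex.I * (x:ℂ) * (ρ:ℂ) = ((x*ρ : ℝ) : ℂ) * Complex.I := by push_cast; ring
      have e2 : Complex.I * (x:ℂ) * (ρ₁:ℂ) = ((x*ρ₁ : ℝ) : ℂ) * Complex.I := by push_cast; ring
      have n1 : ‖Complex.exp (((x*ρ : ℝ):ℂ) * Complex.I)‖ = 1 := by
        rw [Complex.norm_exp_ofReal_mul_I]
      have n2 : ‖Complex.exp (((x*ρ₁ : ℝ):ℂ) * Complex.I)‖ = 1 := by
        rw [Complex.norm_exp_ofReal_mul_I]
      rw [e1, e2]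
      refine (norm_sub_le _ _).trans ?_
      rw [n1, n2]; norm_num
    have hnorm2 : ∀ x : ℝ, |x| * δ ≤ 1 →
        ‖Complex.exp (Complex.I * (x:ℂ) * (ρ:ℂ)) -
        Complex.exp (Complex.I * (x:ℂ) * (ρ₁:ℂ))‖ ≤ 2 * (|x| * δ) := by
      intro x hx1
      have e2 : Complex.I * (x:ℂ) * (ρ₁:ℂ) = ((x*ρ₁ : ℝ) : ℂ) * Complex.I := by push_cast; ring
      have factor : Complex.exp (Complex.I * (x:ℂ) * (ρ:ℂ)) -
          Complex.exp (Complex.I * (x:ℂ) * (ρ₁:ℂ))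
          = Complex.exp (Complex.I * (x:ℂ) * (ρ₁:ℂ)) *
            (Complex.exp (((x*(ρ-ρ₁) : ℝ):ℂ) * Complex.I) - 1) := by
        rw [mul_sub, mul_one, ← Complex.exp_add]
        congr 2
        push_cast; ring
      rw [factor, norm_mul]
      have h1' : ‖Complex.exp (Complex.I * (x:ℂ) * (ρ₁:ℂ))‖ = 1 := by
        rw [e2, Complex.norm_exp_ofReal_mul_I]
      rw [h1', one_mul]
      have hz : ‖(((x*(ρ-ρ₁) : ℝ):ℂ) * Complex.I)‖ = |x| * δ := by
        rw [norm_mul, Complex.norm_I, mul_one, Complex.norm_real, Real.norm_eq_abs, abs_mul, hδdef]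
      have hb := Complex.norm_exp_sub_one_le (x := ((x*(ρ-ρ₁) : ℝ):ℂ) * Complex.I)
        (by rw [hz]; exact hx1)
      rw [hz] at hb
      simpa using hb
    -- pointwise estimate
    have hpoint : ∀ x : ℝ, ‖Complex.exp (Complex.I * (x:ℂ) * (ρ:ℂ)) -
        Complex.exp (Complex.I * (x:ℂ) * (ρ₁:ℂ))‖ ^ 2 / (1 + |x|) ^ (2*s) ≤ g |x| := by
      intro x
      by_cases hx : x = 0
      · subst hx
        simp only [Complex.ofReal_zero, mul_zero, zero_mul, Complex.exp_zero, sub_self,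
          norm_zero]
        rw [zero_pow (by norm_num), zero_div]
        simp only [hg, abs_zero]
        split_ifs <;> positivity
      · have hx0 : 0 < |x| := abs_pos.mpr hx
        have hden : |x| ^ (2*s) ≤ (1 + |x|) ^ (2*s) :=
          Real.rpow_le_rpow (abs_nonneg x) (by linarith) (by linarith)
        have hdpos : (0:ℝ) < |x| ^ (2*s) := Real.rpow_pos_of_pos hx0 _
        by_cases hxA : |x| ≤ A
        · simp only [hg]
          rw [if_pos hxA]
          have hxδ : |x| * δ ≤ 1 := by
            calc |x| * δ ≤ A * δ := by gcongr
              _ = 1 := inv_mul_cancel₀ (ne_of_gt hδ0)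
          have hb := hnorm2 x hxδ
          calc ‖Complex.exp (Complex.I * (x:ℂ) * (ρ:ℂ)) -
              Complex.exp (Complex.I * (x:ℂ) * (ρ₁:ℂ))‖ ^ 2 / (1 + |x|) ^ (2*s)
              ≤ (2 * (|x| * δ)) ^ 2 / |x| ^ (2*s) :=
                div_le_div₀ (by positivity) (pow_le_pow_left₀ (norm_nonneg _) hb 2) hdpos hden
            _ = 4*δ^2 * |x|^(2-2*s) := by
                have hsub : |x| ^ (2-2*s) = |x| ^ (2:ℝ) / |x| ^ (2*s) :=
                  Real.rpow_sub hx0 2 (2*s)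
                rw [hsub, Real.rpow_two]
                field_simp
                ring
        · simp only [hg]
          rw [if_neg hxA]
          calc ‖Complex.exp (Complex.I * (x:ℂ) * (ρ:ℂ)) -
              Complex.exp (Complex.I * (x:ℂ) * (ρ₁:ℂ))‖ ^ 2 / (1 + |x|) ^ (2*s)
              ≤ 2 ^ 2 / |x| ^ (2*s) :=
                div_le_div₀ (by norm_num) (pow_le_pow_left₀ (norm_nonneg _) (hnorm1 x) 2)
                  hdpos hden
            _ = 4 * |x| ^ (-(2*s)) := by
                rw [Real.rpow_neg (abs_nonneg x), div_eq_mul_inv]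
                norm_num
    -- integrability of g on pieces
    have hint1 : IntegrableOn g (Set.Ioc 0 A) := by
      have h := intervalIntegral.intervalIntegrable_rpow' (a := 0) (b := A) (r := 2-2*s)
        (by linarith)
      rw [intervalIntegrable_iff_integrableOn_Ioc_of_le hA.le] at h
      exact IntegrableOn.congr_fun (h.const_mul (4*δ^2))
        (fun t ht => by simp only [hg]; rw [if_pos ht.2]) measurableSet_Ioc
    have hint2 : IntegrableOn g (Set.Ioi A) := by
      exact IntegrableOn.congr_fun
        ((integrableOn_Ioi_rpow_of_lt (by linarith : -(2*s) < -1) hA).const_mul 4)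
        (fun t ht => by simp only [hg]; rw [if_neg (not_le.mpr ht)]) measurableSet_Ioi
    have hgInt : IntegrableOn g (Set.Ioi 0) := by
      rw [← Set.Ioc_union_Ioi_eq_Ioi hA.le]
      exact hint1.union hint2
    have hInt : Integrable (fun x => g |x|) := integrable_comp_abs_of_integrableOn hgInt
    -- integral values
    have hIoc : ∫ t in Set.Ioc (0:ℝ) A, g t = 4*δ^2 * (A^(3-2*s)/(3-2*s)) := by
      rw [setIntegral_congr_fun measurableSet_Ioc
        (g := fun t => 4*δ^2 * t^(2-2*s)) (fun t ht => by simp only [hg]; rw [if_pos ht.2])]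
      rw [← intervalIntegral.integral_of_le hA.le, intervalIntegral.integral_const_mul,
        integral_rpow (Or.inl (by linarith : (-1:ℝ) < 2-2*s))]
      rw [Real.zero_rpow (by linarith : 2-2*s+1 ≠ 0)]
      rw [show 2-2*s+1 = 3-2*s by ring]
      ring
    have hIoi : ∫ t in Set.Ioi A, g t = 4 * (A^(1-2*s)/(2*s-1)) := by
      rw [setIntegral_congr_fun measurableSet_Ioi
        (g := fun t => 4 * t^(-(2*s))) (fun t ht => by simp only [hg]; rw [if_neg (not_le.mpr ht)])]
      rw [integral_const_mul, integral_Ioi_rpow_of_lt (by linarith : -(2*s) < -1) hA]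
      rw [show -(2*s)+1 = 1-2*s by ring]
      rw [show -A^(1-2*s)/(1-2*s) = A^(1-2*s)/(2*s-1) from by
        rw [div_eq_div_iff (by linarith : (1-2*s) ≠ 0) (by linarith : (2*s-1) ≠ 0)]; ring]
    -- A powers in terms of δ
    have hA1 : A ^ (3-2*s) = δ ^ (2*s-3) := by
      rw [hAdef, Real.inv_rpow hδ0.le, ← Real.rpow_neg hδ0.le]
      congr 1; ring
    have hA2 : A ^ (1-2*s) = δ ^ (2*s-1) := by
      rw [hAdef, Real.inv_rpow hδ0.le, ← Real.rpow_neg hδ0.le]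
      congr 1; ring
    have hδ2 : δ^2 * δ^(2*s-3) = δ^(2*s-1) := by
      rw [← Real.rpow_natCast δ 2, ← Real.rpow_add hδ0]
      congr 1
      push_cast; ring
    -- conclude
    calc (∫ x : ℝ, ‖Complex.exp (Complex.I * (x : ℂ) * (ρ : ℂ)) -
          Complex.exp (Complex.I * (x : ℂ) * (ρ₁ : ℂ))‖ ^ 2 / (1 + |x|) ^ (2 * s))
        ≤ ∫ x : ℝ, g |x| := by
          refine integral_mono_of_nonneg (ae_of_all _ fun x => by positivity) hInt
            (ae_of_all _ hpoint)
      _ = 2 * ∫ t in Set.Ioi (0:ℝ), g t := integral_comp_abs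
      _ = 2 * ((∫ t in Set.Ioc (0:ℝ) A, g t) + ∫ t in Set.Ioi A, g t) := by
          rw [← setIntegral_union (Set.Ioc_disjoint_Ioi le_rfl) measurableSet_Ioi hint1 hint2,
            Set.Ioc_union_Ioi_eq_Ioi hA.le]
      _ = (8/(3-2*s) + 8/(2*s-1)) * δ ^ (2*s-1) := by
          rw [hIoc, hIoi, hA1, hA2]
          rw [show 4*δ^2 * (δ^(2*s-3)/(3-2*s)) = 4*(δ^2 * δ^(2*s-3))/(3-2*s) by ring, hδ2]
          field_simp
          ring
      _ ≤ (8/(3-2*s) + 8/(2*s-1)) * |ρ - ρ₁| ^ (2*s-1) := le_of_eq (by rw [← hδdef])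
end

section
/- For s = 3/2, there exists a constant C > 0 such that for all ρ, ρ₁ > 0, ∫_{ℝ} |e^{ixρ} - e^{ixρ₁}|² / (1+|x|)³ dx ≤ C |ρ - ρ₁|² (1 + |ln|ρ - ρ₁||). -/
open MeasureTheory Real Set

lemma aux_norm_bound (x ρ ρ₁ : ℝ) :
    ‖Complex.exp (Complex.I * (x : ℂ) * (ρ : ℂ)) -
      Complex.exp (Complex.I * (x : ℂ) * (ρ₁ : ℂ))‖ ≤ 2 * min 1 (|x| * |ρ - ρ₁|) := by
  set θ : ℝ := x * (ρ - ρ₁) with hθ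
  have key : Complex.exp (Complex.I * (x : ℂ) * (ρ : ℂ)) -
      Complex.exp (Complex.I * (x : ℂ) * (ρ₁ : ℂ)) =
      Complex.exp (Complex.I * (x : ℂ) * (ρ₁ : ℂ)) * (Complex.exp (Complex.I * (θ : ℂ)) - 1) := by
    rw [mul_sub, ← Complex.exp_add, mul_one]
    congr 2
    push_cast [hθ]
    ring
  have h1 : ∀ z : ℝ, ‖Complex.exp (Complex.I * (z : ℂ) * (ρ₁ : ℂ))‖ = 1 := by
    intro z
    rw [Complex.norm_exp]
    simp
  have h2 : ‖Complex.exp (Complex.I * (θ : ℂ))‖ = 1 := by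
    rw [Complex.norm_exp]; simp
  rw [key, norm_mul, h1, one_mul]
  have habs : |θ| = |x| * |ρ - ρ₁| := abs_mul x (ρ - ρ₁)
  rcases le_total |θ| 1 with h | h
  · have := Complex.norm_exp_sub_one_le (x := Complex.I * (θ : ℂ))
      (by simpa [map_mul] using h)
    rw [min_eq_right (habs ▸ h), ← habs]
    simpa [map_mul] using this
  · calc ‖Complex.exp (Complex.I * (θ : ℂ)) - 1‖ ≤ ‖Complex.exp (Complex.I * (θ : ℂ))‖ + ‖(1:ℂ)‖ :=
        norm_sub_le _ _
    _ = 2 := by rw [h2, norm_one]; norm_num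
    _ = 2 * min 1 (|x| * |ρ - ρ₁|) := by rw [min_eq_left (habs ▸ h)]; ring

lemma aux_tail_deriv {t : ℝ} (ht : 0 < 1 + t) :
    HasDerivAt (fun t : ℝ => -(2 * (1 + t) ^ 2)⁻¹) (((1 + t) ^ 3)⁻¹) t := by
  have h1 : HasDerivAt (fun s : ℝ => 1 + s) 1 t := (hasDerivAt_id t).const_add 1
  have h2 : HasDerivAt (fun s : ℝ => 2 * (1 + s) ^ 2) (2 * (2 * (1 + t))) t := by
    simpa [mul_comm, mul_assoc, mul_left_comm] using ((h1.pow 2).const_mul 2)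
  have h3 := (h2.inv (by positivity)).neg
  refine h3.congr_deriv ?_
  field_simp

lemma aux_tail_tendsto :
    Filter.Tendsto (fun t : ℝ => -(2 * (1 + t) ^ 2)⁻¹) Filter.atTop (nhds 0) := by
  have : Filter.Tendsto (fun t : ℝ => 2 * (1 + t) ^ 2) Filter.atTop Filter.atTop := by
    apply Filter.Tendsto.const_mul_atTop two_pos
    exact (Filter.tendsto_pow_atTop (two_ne_zero)).comp
      (Filter.tendsto_atTop_add_const_left _ 1 Filter.tendsto_id)
  simpa using (this.inv_tendsto_atTop).neg

lemma aux_tail_integrable {R : ℝ} (hR : 0 < R) :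
    IntegrableOn (fun t : ℝ => ((1 + t) ^ 3)⁻¹) (Ioi R) := by
  refine integrableOn_Ioi_deriv_of_nonneg' (g := fun t : ℝ => -(2 * (1 + t) ^ 2)⁻¹)
    (l := 0) (fun x hx => aux_tail_deriv (by simp only [mem_Ici] at hx; linarith)) ?_
    aux_tail_tendsto
  intro x hx
  have : (0:ℝ) < 1 + x := by simp only [mem_Ioi] at hx; linarith
  positivity

lemma aux_tail_integral {R : ℝ} (hR : 0 < R) :
    ∫ t in Ioi R, ((1 + t) ^ 3)⁻¹ = (2 * (1 + R) ^ 2)⁻¹ := by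
  have := integral_Ioi_of_hasDerivAt_of_tendsto'
    (f := fun t : ℝ => -(2 * (1 + t) ^ 2)⁻¹) (f' := fun t : ℝ => ((1 + t) ^ 3)⁻¹) (m := 0)
    (fun x hx => aux_tail_deriv (by simp only [mem_Ici] at hx; linarith))
    (aux_tail_integrable hR) aux_tail_tendsto
  rw [this]; ring

lemma aux_head_integral {R : ℝ} (hR : 0 ≤ R) :
    ∫ t in Ioc (0:ℝ) R, (1 + t)⁻¹ = Real.log (1 + R) := by
  rw [← intervalIntegral.integral_of_le hR]
  have h := intervalIntegral.integral_comp_add_left (a := (0:ℝ)) (b := R)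
    (fun y : ℝ => y⁻¹) 1
  simp only [add_zero] at h
  rw [h, integral_inv (by
    rw [uIcc_of_le (by linarith)]
    intro hmem
    exact absurd hmem.1 (by norm_num))]
  rw [div_one]

theorem stmt_2 :
    ∃ C : ℝ, 0 < C ∧ ∀ ρ ρ₁ : ℝ, 0 < ρ → 0 < ρ₁ →
      (∫ x : ℝ, ‖Complex.exp (Complex.I * (x : ℂ) * (ρ : ℂ)) -
          Complex.exp (Complex.I * (x : ℂ) * (ρ₁ : ℂ))‖ ^ 2 / (1 + abs x) ^ 3)
        ≤ C * abs (ρ - ρ₁) ^ 2 * (1 + abs (Real.log (abs (ρ - ρ₁)))) := by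
  refine ⟨12, by norm_num, fun ρ ρ₁ hρ hρ₁ => ?_⟩
  rcases eq_or_ne ρ ρ₁ with rfl | hne
  · simp
  set d : ℝ := |ρ - ρ₁| with hd
  have hdpos : 0 < d := abs_pos.mpr (sub_ne_zero.mpr hne)
  set R : ℝ := 1 / d with hR
  have hRpos : 0 < R := by positivity
  set f : ℝ → ℝ := fun t => (2 * min 1 (t * d)) ^ 2 / (1 + t) ^ 3 with hf
  -- pointwise bound
  have hpt : ∀ x : ℝ, ‖Complex.exp (Complex.I * (x : ℂ) * (ρ : ℂ)) -
      Complex.exp (Complex.I * (x : ℂ) * (ρ₁ : ℂ))‖ ^ 2 / (1 + |x|) ^ 3 ≤ f |x| := by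
    intro x
    have hb := aux_norm_bound x ρ ρ₁
    have hnn : (0:ℝ) ≤ 2 * min 1 (|x| * d) := by
      have : (0:ℝ) ≤ min 1 (|x| * d) := le_min zero_le_one (by positivity)
      linarith
    have hsq : ‖Complex.exp (Complex.I * (x : ℂ) * (ρ : ℂ)) -
        Complex.exp (Complex.I * (x : ℂ) * (ρ₁ : ℂ))‖ ^ 2 ≤ (2 * min 1 (|x| * d)) ^ 2 :=
      pow_le_pow_left₀ (norm_nonneg _) hb 2
    have hden : (0:ℝ) < (1 + |x|) ^ 3 := by positivity
    exact (div_le_div_iff_of_pos_right hden).mpr hsq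
  -- integrability over ℝ
  have hkey3 : ∀ x : ℝ, (1:ℝ) + x ^ 2 ≤ (1 + |x|) ^ 3 := fun x => by
    nlinarith [abs_nonneg x, sq_abs x]
  have hdom : Integrable (fun x : ℝ => 4 * (1 + x ^ 2)⁻¹) := integrable_inv_one_add_sq.const_mul 4
  have hnum4 : ∀ t : ℝ, 0 ≤ t → (2 * min 1 (t * d)) ^ 2 ≤ 4 := by
    intro t ht
    have h1 : min 1 (t * d) ≤ 1 := min_le_left _ _
    have h0 : (0:ℝ) ≤ min 1 (t * d) := le_min zero_le_one (by positivity)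
    nlinarith
  have hcont : Continuous fun x : ℝ => ‖Complex.exp (Complex.I * (x:ℂ) * (ρ:ℂ)) -
      Complex.exp (Complex.I * (x:ℂ) * (ρ₁:ℂ))‖ ^ 2 / (1 + |x|) ^ 3 := by
    apply Continuous.div
    · fun_prop
    · fun_prop
    · intro x; positivity
  have hcontf : Continuous fun x : ℝ => f |x| := by
    apply Continuous.div
    · have : Continuous fun x : ℝ => min 1 (|x| * d) := by fun_prop
      fun_prop
    · fun_prop
    · intro x; positivity
  have hIF : Integrable fun x : ℝ => ‖Complex.exp (Complex.I * (x:ℂ) * (ρ:ℂ)) -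
      Complex.exp (Complex.I * (x:ℂ) * (ρ₁:ℂ))‖ ^ 2 / (1 + |x|) ^ 3 := by
    refine hdom.mono' hcont.aestronglyMeasurable (ae_of_all _ fun x => ?_)
    rw [Real.norm_eq_abs, abs_of_nonneg (by positivity)]
    have hb4 : ‖Complex.exp (Complex.I * (x:ℂ) * (ρ:ℂ)) -
        Complex.exp (Complex.I * (x:ℂ) * (ρ₁:ℂ))‖ ^ 2 ≤ 4 :=
      (pow_le_pow_left₀ (norm_nonneg _) (aux_norm_bound x ρ ρ₁) 2).trans (hnum4 |x| (abs_nonneg x))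
    calc ‖Complex.exp (Complex.I * (x:ℂ) * (ρ:ℂ)) -
        Complex.exp (Complex.I * (x:ℂ) * (ρ₁:ℂ))‖ ^ 2 / (1 + |x|) ^ 3
        ≤ 4 / (1 + |x|) ^ 3 := by gcongr <;> positivity
      _ ≤ 4 / (1 + x ^ 2) := by
          have h0 : (0:ℝ) < 1 + x ^ 2 := by positivity
          gcongr
          exact hkey3 x
      _ = 4 * (1 + x ^ 2)⁻¹ := by rw [div_eq_mul_inv]
  have hIf : Integrable fun x : ℝ => f |x| := by
    refine hdom.mono' hcontf.aestronglyMeasurable (ae_of_all _ fun x => ?_)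
    rw [Real.norm_eq_abs, abs_of_nonneg (by positivity)]
    calc f |x| ≤ 4 / (1 + |x|) ^ 3 := by
          simp only [hf]
          gcongr
          exact hnum4 |x| (abs_nonneg x)
      _ ≤ 4 / (1 + x ^ 2) := by
          have h0 : (0:ℝ) < 1 + x ^ 2 := by positivity
          gcongr
          exact hkey3 x
      _ = 4 * (1 + x ^ 2)⁻¹ := by rw [div_eq_mul_inv]
  -- integrability on the pieces
  have hcf : ContinuousOn f (Ici 0) := by
    apply ContinuousOn.div
    · fun_prop
    · fun_prop
    · intro t ht
      have : (0:ℝ) ≤ t := ht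
      positivity
  have hint1 : IntegrableOn f (Ioc 0 R) :=
    ((hcf.mono (Icc_subset_Ici_self (a := R) (b := 0))).integrableOn_compact
      isCompact_Icc).mono_set Ioc_subset_Icc_self
  have base : IntegrableOn (fun t : ℝ => 4 * ((1 + t) ^ 3)⁻¹) (Ioi R) :=
    (aux_tail_integrable hRpos).const_mul 4
  have hint2 : IntegrableOn f (Ioi R) := by
    refine base.mono' ((hcf.mono fun t ht => (hRpos.trans ht).le).aestronglyMeasurable
      measurableSet_Ioi) ?_
    filter_upwards [ae_restrict_mem measurableSet_Ioi] with t ht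
    have htpos : 0 < t := hRpos.trans ht
    rw [Real.norm_eq_abs, abs_of_nonneg (by simp only [hf]; positivity)]
    simp only [hf]
    rw [div_eq_mul_inv]
    gcongr
    exact hnum4 t htpos.le
  -- splitting
  have hsplit : ∫ t in Ioi (0:ℝ), f t = (∫ t in Ioc (0:ℝ) R, f t) + ∫ t in Ioi R, f t := by
    rw [← Ioc_union_Ioi_eq_Ioi hRpos.le,
      setIntegral_union Ioc_disjoint_Ioi_same measurableSet_Ioi hint1 hint2]
  -- bound on the head
  have hg1 : IntegrableOn (fun t : ℝ => 4 * d ^ 2 * (1 + t)⁻¹) (Ioc 0 R) := by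
    refine (ContinuousOn.integrableOn_compact isCompact_Icc ?_).mono_set
      (Ioc_subset_Icc_self (a := 0) (b := R))
    apply ContinuousOn.mul continuousOn_const
    apply ContinuousOn.inv₀ (by fun_prop)
    intro t ht
    have : (0:ℝ) ≤ t := ht.1
    positivity
  have B1 : ∫ t in Ioc (0:ℝ) R, f t ≤ ∫ t in Ioc (0:ℝ) R, 4 * d ^ 2 * (1 + t)⁻¹ := by
    refine setIntegral_mono_on hint1 hg1 measurableSet_Ioc fun t ht => ?_
    have ht0 : 0 < t := ht.1
    have h1t : (0:ℝ) < 1 + t := by linarith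
    simp only [hf]
    rw [div_le_iff₀ (by positivity)]
    have hm1 : min 1 (t * d) ≤ t * d := min_le_right _ _
    have hm0 : (0:ℝ) ≤ min 1 (t * d) := le_min zero_le_one (by positivity)
    have hrw : 4 * d ^ 2 * (1 + t)⁻¹ * (1 + t) ^ 3 = 4 * d ^ 2 * (1 + t) ^ 2 := by
      field_simp
    rw [hrw]
    nlinarith [sq_nonneg (t * d), hdpos.le, ht0.le]
  have V1 : ∫ t in Ioc (0:ℝ) R, 4 * d ^ 2 * (1 + t)⁻¹ = 4 * d ^ 2 * Real.log (1 + R) := by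
    rw [MeasureTheory.integral_const_mul, aux_head_integral hRpos.le]
  -- bound on the tail
  have B2 : ∫ t in Ioi R, f t ≤ ∫ t in Ioi R, 4 * ((1 + t) ^ 3)⁻¹ := by
    refine setIntegral_mono_on hint2 base measurableSet_Ioi fun t ht => ?_
    have htpos : 0 < t := hRpos.trans ht
    simp only [hf]
    rw [div_eq_mul_inv]
    gcongr
    exact hnum4 t htpos.le
  have V2 : ∫ t in Ioi R, 4 * ((1 + t) ^ 3)⁻¹ = 4 * (2 * (1 + R) ^ 2)⁻¹ := by
    rw [MeasureTheory.integral_const_mul, aux_tail_integral hRpos]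
  rw [V1] at B1
  rw [V2] at B2
  -- final arithmetic
  have hdR : d * R = 1 := by rw [hR]; field_simp
  have htail : 4 * (2 * (1 + R) ^ 2)⁻¹ ≤ 2 * d ^ 2 := by
    rw [show (4:ℝ) * (2 * (1 + R) ^ 2)⁻¹ = 4 / (2 * (1 + R) ^ 2) from by rw [div_eq_mul_inv],
      div_le_iff₀ (by positivity)]
    nlinarith [hdR, hdpos, hRpos]
  have hlog : Real.log (1 + R) ≤ 1 + |Real.log d| := by
    rcases le_total d 1 with hle | hge
    · have h1d : 1 ≤ 1 / d := by rw [le_div_iff₀ hdpos]; linarith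
      have hcmp : 1 + R ≤ 2 / d := by
        rw [hR, show (2:ℝ) / d = 1 / d + 1 / d from by ring]; linarith
      have hlog2 := Real.log_le_log (by positivity) hcmp
      rw [Real.log_div two_ne_zero hdpos.ne'] at hlog2
      have habs : |Real.log d| = -Real.log d := abs_of_nonpos (Real.log_nonpos hdpos.le hle)
      have h2 := Real.log_two_lt_d9
      linarith
    · have hcmp : 1 + R ≤ 2 := by
        have : 1 / d ≤ 1 := by rw [div_le_one hdpos]; linarith
        rw [hR]; linarith
      have hlog2 := Real.log_le_log (by positivity) hcmp
      have h2 := Real.log_two_lt_d9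
      linarith [abs_nonneg (Real.log d)]
  calc (∫ x : ℝ, ‖Complex.exp (Complex.I * (x:ℂ) * (ρ:ℂ)) -
      Complex.exp (Complex.I * (x:ℂ) * (ρ₁:ℂ))‖ ^ 2 / (1 + |x|) ^ 3)
      ≤ ∫ x : ℝ, f |x| := integral_mono hIF hIf hpt
    _ = 2 * ∫ t in Ioi (0:ℝ), f t := integral_comp_abs
    _ ≤ 2 * (4 * d ^ 2 * Real.log (1 + R) + 4 * (2 * (1 + R) ^ 2)⁻¹) := by
        rw [hsplit]; linarith
    _ ≤ 12 * d ^ 2 * (1 + |Real.log d|) := by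
        have e1 := mul_le_mul_of_nonneg_left hlog (show (0:ℝ) ≤ 8 * d ^ 2 by positivity)
        have e2 : (0:ℝ) ≤ d ^ 2 * |Real.log d| := by positivity
        nlinarith [htail]
end
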